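/- Under the ordering p₁/w̄₁ ≥ ⋯ ≥ p_K/w̄_K, the allocation w*_k = w̄_k for k ≤ K₁ and w*_k = (w_tot − ∑_{k'≤K₁} w̄_{k'}) · p_k / (∑_{k'>K₁} p_{k'}) for k > K₁ maximizes ∑_k w_k·log(1 + p_k/(N₀·w_k)) subject to 0 ≤ w_k ≤ w̄_k for all k and ∑_k w_k ≤ w_tot, where K₁ is the number of oversized users (indices with ŵ_k > w̄_k). -/

import Mathlib

/-- Due share of user `k` in the restricted FDMA problem. -/
noncomputable def dueShare (K : ℕ) (p wb : Fin K → ℝ) (wtot : ℝ) (k : Fin K) : ℝ :=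
  (wtot - ∑ k' ∈ Finset.univ.filter (fun k' : Fin K => k' < k), wb k') * p k /
    (∑ k' ∈ Finset.univ.filter (fun k' : Fin K => k ≤ k'), p k')

/-- The optimal restricted-FDMA allocation: oversized users receive their upper limits,
and the remaining bandwidth is shared proportionally among non-oversized users. -/
noncomputable def wopt (K : ℕ) (p wb : Fin K → ℝ) (wtot : ℝ) (K₁ : ℕ) (k : Fin K) : ℝ :=
  if (k : ℕ) < K₁ then wb k
  else (wtot - ∑ k' ∈ Finset.univ.filter (fun k' : Fin K => (k' : ℕ) < K₁), wb k') * p k /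
    (∑ k' ∈ Finset.univ.filter (fun k' : Fin K => K₁ ≤ (k' : ℕ)), p k')

noncomputable def Gfun (t : ℝ) : ℝ := Real.log (1 + t) - t / (1 + t)

lemma Gfun_nonneg {t : ℝ} (ht : 0 ≤ t) : 0 ≤ Gfun t := by
  have h1 : (0:ℝ) < 1 + t := by linarith
  have h2 := Real.log_le_sub_one_of_pos (x := 1/(1+t)) (by positivity)
  rw [Real.log_div one_ne_zero (ne_of_gt h1), Real.log_one] at h2
  unfold Gfun
  have h3 : t/(1+t) = 1 - 1/(1+t) := by field_simp; ring
  rw [h3]; linarith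

lemma Gfun_mono {t u : ℝ} (ht : 0 ≤ t) (htu : t ≤ u) : Gfun t ≤ Gfun u := by
  have h1 : (0:ℝ) < 1 + t := by linarith
  have h2 : (0:ℝ) < 1 + u := by linarith
  have h3 := Real.log_le_sub_one_of_pos (x := (1+t)/(1+u)) (by positivity)
  rw [Real.log_div (ne_of_gt h1) (ne_of_gt h2)] at h3
  unfold Gfun
  have e1 : t/(1+t) = 1 - 1/(1+t) := by field_simp; ring
  have e2 : u/(1+u) = 1 - 1/(1+u) := by field_simp; ring
  rw [e1, e2]
  have h4 : 1/(1+t) - 1/(1+u) ≤ (u - t)/(1+u) := by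
    rw [div_sub_div _ _ (ne_of_gt h1) (ne_of_gt h2), div_le_div_iff₀ (by positivity) h2]
    nlinarith [mul_nonneg (mul_nonneg (sub_nonneg.mpr htu) ht) h2.le]
  have h5 : (1+t)/(1+u) - 1 = -((u-t)/(1+u)) := by
    field_simp
    ring
  linarith [h3, h4, h5.le, h5.ge]

lemma tangent_log {c W w : ℝ} (hc : 0 < c) (hW : 0 < W) (hw : 0 ≤ w) :
    w * Real.log (1 + c / w) ≤ W * Real.log (1 + c / W) + Gfun (c / W) * (w - W) := by
  set t := c / W with ht
  have ht0 : 0 < t := div_pos hc hW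
  have h1t : (0:ℝ) < 1 + t := by linarith
  rcases eq_or_lt_of_le hw with h0 | h0
  · rw [← h0]
    simp only [div_zero, add_zero, Real.log_one, mul_zero, zero_mul]
    have : W * Real.log (1+t) + Gfun t * (0 - W) = W * (t/(1+t)) := by
      unfold Gfun; ring
    rw [this]
    positivity
  · set u := c / w with hu
    have hu0 : 0 < u := div_pos hc h0
    have h1u : (0:ℝ) < 1 + u := by linarith
    have hx : Real.log ((1+u)/(1+t)) ≤ (1+u)/(1+t) - 1 :=
      Real.log_le_sub_one_of_pos (by positivity)
    have hlog : Real.log (1+u) = Real.log (1+t) + Real.log ((1+u)/(1+t)) := by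
      rw [Real.log_div (ne_of_gt h1u) (ne_of_gt h1t)]; ring
    have hcu : w * u = c := by rw [hu]; field_simp
    have hct : W * t = c := by rw [ht]; field_simp
    have h2 : w * Real.log ((1+u)/(1+t)) ≤ w * ((1+u)/(1+t) - 1) :=
      mul_le_mul_of_nonneg_left hx hw
    have heq : w * ((1+u)/(1+t) - 1) + (t/(1+t)) * (w - W) = 0 := by
      field_simp
      linear_combination hcu - hct
    unfold Gfun
    rw [hlog]
    nlinarith [h2, heq]

lemma tangent_logb {c W w m : ℝ} (hc : 0 < c) (hW : 0 < W) (hw : 0 ≤ w)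
    (hm : m ≤ Gfun (c/W)) (hcase : w ≤ W ∨ m = Gfun (c/W)) :
    w * Real.logb 2 (1 + c / w) ≤ W * Real.logb 2 (1 + c / W) + m / Real.log 2 * (w - W) := by
  have hl2 : (0:ℝ) < Real.log 2 := Real.log_pos (by norm_num)
  have h1 := tangent_log hc hW hw
  have key : w * Real.log (1 + c/w) ≤ W * Real.log (1 + c/W) + m * (w - W) := by
    rcases hcase with h | h
    · have h2 : Gfun (c/W) * (w - W) ≤ m * (w - W) :=
        mul_le_mul_of_nonpos_right hm (by linarith)
      linarith
    · rw [h]; exact h1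
  rw [Real.logb, Real.logb]
  have e1 : w * (Real.log (1+c/w) / Real.log 2) = (w * Real.log (1+c/w)) / Real.log 2 := by ring
  have e2 : W * (Real.log (1+c/W) / Real.log 2) + m / Real.log 2 * (w - W)
      = (W * Real.log (1+c/W) + m * (w - W)) / Real.log 2 := by ring
  rw [e1, e2]
  exact div_le_div_of_nonneg_right key hl2.le

noncomputable def AA (K : ℕ) (wb : Fin K → ℝ) (wtot : ℝ) (m : ℕ) : ℝ :=
  wtot - ∑ k' ∈ Finset.univ.filter (fun k' : Fin K => (k' : ℕ) < m), wb k'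

noncomputable def TT (K : ℕ) (p : Fin K → ℝ) (m : ℕ) : ℝ :=
  ∑ k' ∈ Finset.univ.filter (fun k' : Fin K => m ≤ (k' : ℕ)), p k'

lemma dueShare_eq (K : ℕ) (p wb : Fin K → ℝ) (wtot : ℝ) (k : Fin K) :
    dueShare K p wb wtot k = AA K wb wtot (k : ℕ) * p k / TT K p (k : ℕ) := by
  have h1 : (Finset.univ.filter (fun k' : Fin K => k' < k))
      = (Finset.univ.filter (fun k' : Fin K => (k':ℕ) < (k:ℕ))) := by
    apply Finset.filter_congr; intro x _; exact Fin.lt_def ..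
  have h2 : (Finset.univ.filter (fun k' : Fin K => k ≤ k'))
      = (Finset.univ.filter (fun k' : Fin K => (k:ℕ) ≤ (k':ℕ))) := by
    apply Finset.filter_congr; intro x _; exact Fin.le_def ..
  unfold dueShare AA TT
  rw [h1, h2]

lemma AA_succ (K : ℕ) (wb : Fin K → ℝ) (wtot : ℝ) {m : ℕ} (hm : m < K) :
    AA K wb wtot (m+1) = AA K wb wtot m - wb ⟨m, hm⟩ := by
  unfold AA
  have h : Finset.univ.filter (fun k' : Fin K => (k':ℕ) < m+1)
      = insert (⟨m, hm⟩ : Fin K) (Finset.univ.filter (fun k' : Fin K => (k':ℕ) < m)) := by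
    ext x
    simp only [Finset.mem_filter, Finset.mem_insert, Finset.mem_univ, true_and, Fin.ext_iff]
    omega
  rw [h, Finset.sum_insert (by simp)]
  ring

lemma TT_succ (K : ℕ) (p : Fin K → ℝ) {m : ℕ} (hm : m < K) :
    TT K p m = p ⟨m, hm⟩ + TT K p (m+1) := by
  unfold TT
  have h : Finset.univ.filter (fun k' : Fin K => m ≤ (k':ℕ))
      = insert (⟨m, hm⟩ : Fin K) (Finset.univ.filter (fun k' : Fin K => m+1 ≤ (k':ℕ))) := by
    ext x
    simp only [Finset.mem_filter, Finset.mem_insert, Finset.mem_univ, true_and, Fin.ext_iff]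
    omega
  rw [h, Finset.sum_insert (by simp)]

lemma TT_pos (K : ℕ) (p : Fin K → ℝ) (hp : ∀ k, 0 < p k) {m : ℕ} (hm : m < K) :
    0 < TT K p m := by
  unfold TT
  apply Finset.sum_pos (fun i _ => hp i)
  exact ⟨⟨m, hm⟩, by simp⟩

lemma TT_K (K : ℕ) (p : Fin K → ℝ) : TT K p K = 0 := by
  unfold TT
  rw [Finset.filter_false_of_mem, Finset.sum_empty]
  intro x _
  have := x.isLt
  omega

lemma AA_zero (K : ℕ) (wb : Fin K → ℝ) (wtot : ℝ) : AA K wb wtot 0 = wtot := by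
  unfold AA
  rw [Finset.filter_false_of_mem (fun x _ => by omega), Finset.sum_empty]
  ring

lemma AA_K (K : ℕ) (wb : Fin K → ℝ) (wtot : ℝ) : AA K wb wtot K = wtot - ∑ k, wb k := by
  unfold AA
  rw [Finset.filter_true_of_mem (fun x _ => x.isLt)]

lemma wopt_lt (K : ℕ) (p wb : Fin K → ℝ) (wtot : ℝ) (K₁ : ℕ) {k : Fin K}
    (h : (k : ℕ) < K₁) : wopt K p wb wtot K₁ k = wb k := by
  unfold wopt; rw [if_pos h]

lemma wopt_ge (K : ℕ) (p wb : Fin K → ℝ) (wtot : ℝ) (K₁ : ℕ) {k : Fin K}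
    (h : K₁ ≤ (k : ℕ)) : wopt K p wb wtot K₁ k = (AA K wb wtot K₁ / TT K p K₁) * p k := by
  unfold wopt AA TT
  rw [if_neg (by omega)]
  rw [mul_div_right_comm]

/-- The allocation `w*` (upper limits for the `K₁` oversized users, proportional share of the
remaining bandwidth for the rest) is feasible and maximizes the FDMA sum rate subject to
`0 ≤ w_k ≤ w̄_k` and `∑ w_k ≤ w_tot`. -/
theorem stmt_3 (K : ℕ) (p wb : Fin K → ℝ) (hp : ∀ k, 0 < p k) (hwb : ∀ k, 0 < wb k)
    (wtot N₀ : ℝ) (hwtot : 0 < wtot) (hN : 0 < N₀)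
    (hord : ∀ i j : Fin K, i ≤ j → p j / wb j ≤ p i / wb i)
    (K₁ : ℕ) (hK₁ : K₁ ≤ K)
    (hchar : ∀ k : Fin K, (dueShare K p wb wtot k > wb k ↔ (k : ℕ) < K₁)) :
    (∀ k, 0 ≤ wopt K p wb wtot K₁ k ∧ wopt K p wb wtot K₁ k ≤ wb k) ∧
    (∑ k, wopt K p wb wtot K₁ k) ≤ wtot ∧
    (∀ w : Fin K → ℝ, (∀ k, 0 ≤ w k ∧ w k ≤ wb k) → (∑ k, w k) ≤ wtot →
      (∑ k, w k * Real.logb 2 (1 + p k / (N₀ * w k))) ≤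
      (∑ k, wopt K p wb wtot K₁ k * Real.logb 2 (1 + p k / (N₀ * wopt K p wb wtot K₁ k)))) := by
  classical
  have hl2 : (0:ℝ) < Real.log 2 := Real.log_pos (by norm_num)
  rcases eq_or_lt_of_le hK₁ with hKK | hKlt
  · -- Case K₁ = K : all users saturated
    have hwopt : ∀ k : Fin K, wopt K p wb wtot K₁ k = wb k :=
      fun k => wopt_lt K p wb wtot K₁ (by have := k.isLt; omega)
    refine ⟨fun k => by rw [hwopt k]; exact ⟨(hwb k).le, le_refl _⟩, ?_, ?_⟩
    · have hsum : ∑ k, wopt K p wb wtot K₁ k = ∑ k, wb k :=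
        Finset.sum_congr rfl (fun k _ => hwopt k)
      rw [hsum]
      rcases Nat.eq_zero_or_pos K with h0 | hpos
      · subst h0
        simp only [Finset.univ_eq_empty, Finset.sum_empty]
        exact hwtot.le
      · obtain ⟨n, rfl⟩ : ∃ n, K = n + 1 := ⟨K - 1, by omega⟩
        have hn : n < n + 1 := by omega
        have hc1 := (hchar ⟨n, hn⟩).mpr (by show n < K₁; omega)
        rw [dueShare_eq] at hc1
        have hval : ((⟨n, hn⟩ : Fin (n+1)) : ℕ) = n := rfl
        rw [hval] at hc1
        have hTn : TT (n+1) p n = p ⟨n, hn⟩ := by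
          rw [TT_succ (n+1) p hn, TT_K]; ring
        rw [hTn, mul_div_assoc, div_self (hp ⟨n, hn⟩).ne', mul_one] at hc1
        have hAs := AA_succ (n+1) wb wtot hn
        rw [AA_K] at hAs
        linarith
    · intro w hw hwsum
      apply Finset.sum_le_sum
      intro k _
      rw [hwopt k]
      have hc : 0 < p k / N₀ := div_pos (hp k) hN
      have h1 : p k / (N₀ * w k) = (p k / N₀) / w k := by rw [div_div]
      have h2 : p k / (N₀ * wb k) = (p k / N₀) / wb k := by rw [div_div]
      rw [h1, h2]
      have := tangent_logb (m := 0) hc (hwb k) (hw k).1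
        (Gfun_nonneg (div_pos hc (hwb k)).le) (Or.inl (hw k).2)
      simpa using this
  · -- Case K₁ < K
    set lam := AA K wb wtot K₁ / TT K p K₁ with hlam_def
    have hS : 0 < TT K p K₁ := TT_pos K p hp hKlt
    -- key step inequality from hchar, for m < K₁
    have hstep : ∀ m (hmK : m < K) (_ : m < K₁),
        wb ⟨m, hmK⟩ * TT K p m < AA K wb wtot m * p ⟨m, hmK⟩ := by
      intro m hmK hm
      have hc1 := (hchar ⟨m, hmK⟩).mpr (by show m < K₁; omega)
      rw [dueShare_eq] at hc1
      have hval : ((⟨m, hmK⟩ : Fin K) : ℕ) = m := rfl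
      rw [hval] at hc1
      have hTm : 0 < TT K p m := TT_pos K p hp (by omega)
      exact (lt_div_iff₀ hTm).mp hc1
    -- AA m ≤ lam * TT m for m ≤ K₁
    have hR0 : ∀ j, j ≤ K₁ → AA K wb wtot (K₁ - j) ≤ lam * TT K p (K₁ - j) := by
      intro j
      induction j with
      | zero =>
        intro _
        simp only [Nat.sub_zero]
        rw [hlam_def, div_mul_cancel₀ _ hS.ne']
      | succ n ih =>
        intro hn
        have ihn := ih (by omega)
        set m := K₁ - (n+1) with hm_def
        have hm1 : K₁ - n = m + 1 := by omega
        have hmK : m < K := by omega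
        have hmK₁ : m < K₁ := by omega
        rw [hm1] at ihn
        have h1 := hstep m hmK hmK₁
        have hTm1 : 0 < TT K p (m+1) := TT_pos K p hp (by omega : m + 1 < K)
        have hstepT := TT_succ K p hmK
        have hstepA := AA_succ K wb wtot hmK
        rw [hstepA] at ihn
        rw [hstepT] at h1 ⊢
        have hbp : wb ⟨m, hmK⟩ * TT K p (m+1) < lam * p ⟨m, hmK⟩ * TT K p (m+1) := by
          nlinarith [mul_le_mul_of_nonneg_right ihn (hp ⟨m, hmK⟩).le]
        have hb : wb ⟨m, hmK⟩ < lam * p ⟨m, hmK⟩ := lt_of_mul_lt_mul_right hbp hTm1.le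
        nlinarith [ihn, hb]
    have hR : ∀ m, m ≤ K₁ → AA K wb wtot m ≤ lam * TT K p m := by
      intro m hm
      have := hR0 (K₁ - m) (by omega)
      rwa [Nat.sub_sub_self hm] at this
    -- positivity of remaining bandwidth
    have hB : 0 < AA K wb wtot K₁ := by
      rcases Nat.eq_zero_or_pos K₁ with h0 | hpos
      · rw [h0, AA_zero]; exact hwtot
      · obtain ⟨n, hn⟩ : ∃ n, K₁ = n + 1 := ⟨K₁ - 1, by omega⟩
        have hnK : n < K := by omega
        have h1 := hstep n hnK (by omega)
        have hTm : 0 < TT K p n := TT_pos K p hp (by omega)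
        have hTm1 : 0 < TT K p (n+1) := TT_pos K p hp (by omega : n + 1 < K)
        have hstepT := TT_succ K p hnK
        have hstepA := AA_succ K wb wtot hnK
        have hApos : 0 < AA K wb wtot n := by
          nlinarith [mul_pos (hwb ⟨n, hnK⟩) hTm, hp ⟨n, hnK⟩]
        rw [hn]
        rw [hstepA]
        nlinarith [hTm, hTm1, hp ⟨n, hnK⟩, hstepT, h1, hApos]
    have hlam : 0 < lam := div_pos hB hS
    -- wb k ≤ lam * p k for k < K₁
    have hwbk : ∀ k : Fin K, (k : ℕ) < K₁ → wb k ≤ lam * p k := by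
      intro k hk
      have h1 := hstep (k : ℕ) k.isLt hk
      have h2 := hR (k : ℕ) hk.le
      have hTk : 0 < TT K p (k : ℕ) := TT_pos K p hp (by omega)
      have hkk : (⟨(k:ℕ), k.isLt⟩ : Fin K) = k := by ext; rfl
      rw [hkk] at h1
      nlinarith [mul_le_mul_of_nonneg_right h2 (hp k).le, hTk, h1]
    -- lam * p k ≤ wb k for k ≥ K₁
    have hub : ∀ k : Fin K, K₁ ≤ (k : ℕ) → lam * p k ≤ wb k := by
      intro k hk
      set k₀ : Fin K := ⟨K₁, hKlt⟩ with hk₀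
      have hk₀v : (k₀ : ℕ) = K₁ := rfl
      have hc1 : ¬ dueShare K p wb wtot k₀ > wb k₀ := by
        rw [hchar k₀, hk₀v]; omega
      push_neg at hc1
      rw [dueShare_eq, hk₀v] at hc1
      have hc2 : lam * p k₀ ≤ wb k₀ := by
        rw [hlam_def, div_mul_eq_mul_div]
        exact hc1
      have hord' := hord k₀ k (by rw [Fin.le_def, hk₀v]; exact hk)
      rw [div_le_div_iff₀ (hwb k) (hwb k₀)] at hord'
      nlinarith [mul_le_mul_of_nonneg_right hc2 (hp k).le, hp k₀, hwb k₀, hp k, hlam]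
    -- the sum of the allocation equals wtot
    have hsum : ∑ k, wopt K p wb wtot K₁ k = wtot := by
      rw [← Finset.sum_filter_add_sum_filter_not Finset.univ (fun k : Fin K => (k:ℕ) < K₁)]
      have e1 : ∑ k ∈ Finset.univ.filter (fun k : Fin K => (k:ℕ) < K₁), wopt K p wb wtot K₁ k
          = ∑ k ∈ Finset.univ.filter (fun k : Fin K => (k:ℕ) < K₁), wb k :=
        Finset.sum_congr rfl (fun k hk => wopt_lt K p wb wtot K₁ (by simpa using hk))
      have e2 : ∑ k ∈ Finset.univ.filter (fun k : Fin K => ¬ (k:ℕ) < K₁), wopt K p wb wtot K₁ k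
          = ∑ k ∈ Finset.univ.filter (fun k : Fin K => K₁ ≤ (k:ℕ)), lam * p k := by
        rw [Finset.filter_congr
          (fun x _ => by omega : ∀ x ∈ (Finset.univ : Finset (Fin K)), ((¬ (x:ℕ) < K₁) ↔ K₁ ≤ (x:ℕ)))]
        exact Finset.sum_congr rfl (fun k hk => wopt_ge K p wb wtot K₁ (by simpa using hk))
      rw [e1, e2, ← Finset.mul_sum]
      have e3 : (∑ k ∈ Finset.univ.filter (fun k : Fin K => K₁ ≤ (k:ℕ)), p k) = TT K p K₁ := rfl
      have e4 : (∑ k ∈ Finset.univ.filter (fun k : Fin K => (k:ℕ) < K₁), wb k)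
          = wtot - AA K wb wtot K₁ := by
        unfold AA; ring
      rw [e3, e4, hlam_def, div_mul_cancel₀ _ hS.ne']
      ring
    refine ⟨?_, by rw [hsum], ?_⟩
    · intro k
      by_cases hk : (k : ℕ) < K₁
      · rw [wopt_lt K p wb wtot K₁ hk]; exact ⟨(hwb k).le, le_refl _⟩
      · push_neg at hk
        rw [wopt_ge K p wb wtot K₁ hk]
        exact ⟨(mul_pos hlam (hp k)).le, hub k hk⟩
    · intro w hw hwsum
      set τ : ℝ := 1 / (N₀ * lam) with hτ_def
      have hτ : 0 < τ := by positivity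
      have key : ∀ k : Fin K, w k * Real.logb 2 (1 + p k/(N₀ * w k)) ≤
          wopt K p wb wtot K₁ k * Real.logb 2 (1 + p k/(N₀ * wopt K p wb wtot K₁ k))
            + (Gfun τ / Real.log 2) * (w k - wopt K p wb wtot K₁ k) := by
        intro k
        have hc : 0 < p k / N₀ := div_pos (hp k) hN
        have h1 : p k / (N₀ * w k) = (p k / N₀) / w k := by rw [div_div]
        by_cases hk : (k : ℕ) < K₁
        · rw [wopt_lt K p wb wtot K₁ hk]
          have h2 : p k / (N₀ * wb k) = (p k / N₀) / wb k := by rw [div_div]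
          rw [h1, h2]
          have hτle : τ ≤ (p k / N₀) / wb k := by
            rw [hτ_def, div_le_div_iff₀ (by positivity) (hwb k)]
            have hwk := hwbk k hk
            have hh : p k / N₀ * (N₀ * lam) = lam * p k := by field_simp
            rw [hh]
            linarith
          exact tangent_logb hc (hwb k) (hw k).1 (Gfun_mono hτ.le hτle) (Or.inl (hw k).2)
        · push_neg at hk
          rw [wopt_ge K p wb wtot K₁ hk]
          have hW : 0 < lam * p k := mul_pos hlam (hp k)
          have h2 : p k / (N₀ * (lam * p k)) = (p k / N₀) / (lam * p k) := by rw [div_div]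
          rw [h1, h2]
          have heq : Gfun τ = Gfun ((p k / N₀) / (lam * p k)) := by
            congr 1
            rw [hτ_def]
            field_simp
            ring_nf; rw [mul_inv_cancel₀ (hp k).ne']
          exact tangent_logb hc hW (hw k).1 (le_of_eq heq) (Or.inr heq)
      calc ∑ k, w k * Real.logb 2 (1 + p k/(N₀ * w k))
          ≤ ∑ k, (wopt K p wb wtot K₁ k * Real.logb 2 (1 + p k/(N₀ * wopt K p wb wtot K₁ k))
            + (Gfun τ / Real.log 2) * (w k - wopt K p wb wtot K₁ k)) :=
            Finset.sum_le_sum (fun k _ => key k)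
        _ = (∑ k, wopt K p wb wtot K₁ k * Real.logb 2 (1 + p k/(N₀ * wopt K p wb wtot K₁ k)))
            + (Gfun τ / Real.log 2) * ((∑ k, w k) - ∑ k, wopt K p wb wtot K₁ k) := by
            rw [Finset.sum_add_distrib, ← Finset.mul_sum, Finset.sum_sub_distrib]
        _ ≤ ∑ k, wopt K p wb wtot K₁ k * Real.logb 2 (1 + p k/(N₀ * wopt K p wb wtot K₁ k)) := by
            have hG : 0 ≤ Gfun τ / Real.log 2 := div_nonneg (Gfun_nonneg hτ.le) hl2.le
            have hle : (∑ k, w k) - (∑ k, wopt K p wb wtot K₁ k) ≤ 0 := by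
              rw [hsum]; linarith
            linarith [mul_nonpos_of_nonneg_of_nonpos hG hle]
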